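/- Suppose ‖H − A ⊗ B‖_F = ‖R P Rᵀ − (R a)(R b)ᵀ‖_F for an invertible matrix R, where A, B are built linearly from vectors a, b. Then the minimizer over rank-one factors of ‖H − A ⊗ B‖_F is attained by choosing a = √σ₁ R⁻¹ ũ₁ and b = √σ₁ R⁻¹ ṽ₁, where σ₁, ũ₁, ṽ₁ are the largest singular value and singular vectors of P̃ = R P Rᵀ. -/
import Mathlib


open Matrix Kronecker

private lemma sum_left' {ι κ : Type*} [Fintype ι] [Fintype κ] (c : κ → ℝ) (w : κ → ι → ℝ)
    (g : ι → ℝ) :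
    ∑ i, (∑ k, c k * w k i) * g i = ∑ k, c k * ∑ i, w k i * g i := by
  simp_rw [Finset.sum_mul, Finset.mul_sum]
  rw [Finset.sum_comm]
  exact Finset.sum_congr rfl fun k _ => Finset.sum_congr rfl fun i _ => by ring

private lemma frob_sum_left' {ι ι' κ : Type*} [Fintype ι] [Fintype ι'] [Fintype κ]
    (c : κ → ℝ) (W : κ → ι → ι' → ℝ) (N : ι → ι' → ℝ) :
    ∑ i, ∑ j, (∑ k, c k * W k i j) * N i j = ∑ k, c k * ∑ i, ∑ j, W k i j * N i j := by
  have h : ∀ i, ∑ j, (∑ k, c k * W k i j) * N i j = ∑ k, c k * ∑ j, W k i j * N i j :=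
    fun i => sum_left' c (fun k j => W k i j) (N i)
  simp_rw [h]
  rw [Finset.sum_comm]
  simp_rw [← Finset.mul_sum]

private lemma frob_rank1' {ι ι' : Type*} [Fintype ι] [Fintype ι']
    (a c : ι → ℝ) (b d : ι' → ℝ) :
    ∑ i, ∑ j, (a i * b j) * (c i * d j) = (∑ i, a i * c i) * (∑ j, b j * d j) := by
  rw [Finset.sum_mul_sum]
  exact Finset.sum_congr rfl fun i _ => Finset.sum_congr rfl fun j _ => by ring

private lemma bessel' {n r : ℕ} (u : Fin r → Fin n → ℝ)
    (hu : ∀ i j : Fin r, (∑ k, u i k * u j k) = if i = j then 1 else 0)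
    (x : Fin n → ℝ) :
    ∑ k, (∑ i, u k i * x i) ^ 2 ≤ ∑ i, (x i) ^ 2 := by
  set α : Fin r → ℝ := fun k => ∑ i, u k i * x i with hα
  have h0 : (0:ℝ) ≤ ∑ i, (x i - ∑ k, α k * u k i) ^ 2 :=
    Finset.sum_nonneg fun i _ => sq_nonneg _
  have hB1 : ∑ i, (∑ k, α k * u k i) * x i = ∑ k, (α k) ^ 2 := by
    rw [sum_left' α u x]
    refine Finset.sum_congr rfl fun k _ => ?_
    have h : (∑ i, u k i * x i) = α k := rfl
    rw [h]; ring
  have hB2 : ∑ i, (∑ k, α k * u k i) * (∑ k, α k * u k i) = ∑ k, (α k) ^ 2 := by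
    rw [sum_left' α u (fun i => ∑ k, α k * u k i)]
    have h : ∀ k, ∑ i, u k i * (∑ l, α l * u l i) = α k := by
      intro k
      have h2 : ∑ i, (∑ l, α l * u l i) * u k i = ∑ l, α l * ∑ i, u l i * u k i :=
        sum_left' α u (u k)
      simp_rw [mul_comm (u k _)]
      rw [h2]
      simp [hu, Finset.sum_ite_eq', mul_ite]
    simp_rw [h]
    exact Finset.sum_congr rfl fun k _ => by ring
  have hexp : ∑ i, (x i - ∑ k, α k * u k i) ^ 2
      = ∑ i, (x i) ^ 2 - ∑ k, (α k) ^ 2 := by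
    have h : ∀ i, (x i - ∑ k, α k * u k i) ^ 2
        = (x i) ^ 2 - 2 * ((∑ k, α k * u k i) * x i)
          + (∑ k, α k * u k i) * (∑ k, α k * u k i) := by intro i; ring
    simp_rw [h]
    rw [Finset.sum_add_distrib, Finset.sum_sub_distrib, ← Finset.mul_sum, hB1, hB2]
    ring
  rw [hexp] at h0
  linarith

private lemma expand_formula' {n r : ℕ} (σ : Fin r → ℝ) (u v : Fin r → Fin n → ℝ)
    (hu : ∀ i j : Fin r, (∑ k, u i k * u j k) = if i = j then 1 else 0)
    (hv : ∀ i j : Fin r, (∑ k, v i k * v j k) = if i = j then 1 else 0)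
    (x y : Fin n → ℝ) :
    ∑ i, ∑ j, ((∑ k, σ k * (u k i * v k j)) - x i * y j) ^ 2
      = (∑ k, (σ k) ^ 2)
        - 2 * (∑ k, σ k * ((∑ i, u k i * x i) * (∑ j, v k j * y j)))
        + (∑ i, (x i) ^ 2) * (∑ j, (y j) ^ 2) := by
  have hWM : ∀ k : Fin r, ∑ i, ∑ j, (u k i * v k j) * (∑ l, σ l * (u l i * v l j)) = σ k := by
    intro k
    have h1 : ∀ i j : Fin n, (u k i * v k j) * (∑ l, σ l * (u l i * v l j))
        = (∑ l, σ l * (u l i * v l j)) * (u k i * v k j) := fun i j => by ring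
    simp_rw [h1]
    rw [frob_sum_left' σ (fun l i j => u l i * v l j) (fun i j => u k i * v k j)]
    have h2 : ∀ l, ∑ i, ∑ j, (u l i * v l j) * (u k i * v k j)
        = (∑ i, u l i * u k i) * (∑ j, v l j * v k j) := fun l => frob_rank1' _ _ _ _
    simp_rw [h2, hu, hv]
    simp [Finset.sum_ite_eq', mul_ite]
  have hT1 : ∑ i, ∑ j, (∑ k, σ k * (u k i * v k j)) * (∑ k, σ k * (u k i * v k j))
      = ∑ k, (σ k) ^ 2 := by
    rw [frob_sum_left' σ (fun k i j => u k i * v k j) (fun i j => ∑ k, σ k * (u k i * v k j))]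
    simp_rw [hWM]
    exact Finset.sum_congr rfl fun k _ => by ring
  have hT2 : ∑ i, ∑ j, (∑ k, σ k * (u k i * v k j)) * (x i * y j)
      = ∑ k, σ k * ((∑ i, u k i * x i) * (∑ j, v k j * y j)) := by
    rw [frob_sum_left' σ (fun k i j => u k i * v k j) (fun i j => x i * y j)]
    exact Finset.sum_congr rfl fun k _ => by rw [frob_rank1']
  have hT3 : ∑ i, ∑ j, (x i * y j) * (x i * y j)
      = (∑ i, (x i) ^ 2) * (∑ j, (y j) ^ 2) := by
    rw [frob_rank1']
    simp [sq]
  have hexp : ∀ i j : Fin n, ((∑ k, σ k * (u k i * v k j)) - x i * y j) ^ 2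
      = (∑ k, σ k * (u k i * v k j)) * (∑ k, σ k * (u k i * v k j))
        - 2 * ((∑ k, σ k * (u k i * v k j)) * (x i * y j))
        + (x i * y j) * (x i * y j) := fun i j => by ring
  simp_rw [hexp]
  rw [show (∑ i, ∑ j, ((∑ k, σ k * (u k i * v k j)) * (∑ k, σ k * (u k i * v k j))
        - 2 * ((∑ k, σ k * (u k i * v k j)) * (x i * y j))
        + (x i * y j) * (x i * y j)))
      = (∑ i, ∑ j, (∑ k, σ k * (u k i * v k j)) * (∑ k, σ k * (u k i * v k j)))
        - 2 * (∑ i, ∑ j, (∑ k, σ k * (u k i * v k j)) * (x i * y j))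
        + ∑ i, ∑ j, (x i * y j) * (x i * y j) from by
    simp_rw [Finset.sum_add_distrib, Finset.sum_sub_distrib, Finset.mul_sum]]
  rw [hT1, hT2, hT3]

private lemma lower_bound' {n r : ℕ} (hr : 0 < r) (σ : Fin r → ℝ) (u v : Fin r → Fin n → ℝ)
    (hσpos : ∀ i, 0 < σ i)
    (hσdec : ∀ i j : Fin r, i ≤ j → σ j ≤ σ i)
    (hu : ∀ i j : Fin r, (∑ k, u i k * u j k) = if i = j then 1 else 0)
    (hv : ∀ i j : Fin r, (∑ k, v i k * v j k) = if i = j then 1 else 0)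
    (x y : Fin n → ℝ)
    (hef : ∑ i, ∑ j, ((∑ k, σ k * (u k i * v k j)) - x i * y j) ^ 2
      = (∑ k, (σ k) ^ 2)
        - 2 * (∑ k, σ k * ((∑ i, u k i * x i) * (∑ j, v k j * y j)))
        + (∑ i, (x i) ^ 2) * (∑ j, (y j) ^ 2)) :
    (∑ k, (σ k) ^ 2) - (σ ⟨0, hr⟩) ^ 2
      ≤ ∑ i, ∑ j, ((∑ k, σ k * (u k i * v k j)) - x i * y j) ^ 2 := by
  rw [hef]
  set α : Fin r → ℝ := fun k => ∑ i, u k i * x i with hα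
  set β : Fin r → ℝ := fun k => ∑ j, v k j * y j with hβ
  set σ₀ : ℝ := σ ⟨0, hr⟩ with hσ₀
  set t : ℝ := ∑ k, |α k| * |β k| with ht
  have ht0 : 0 ≤ t := Finset.sum_nonneg fun k _ => by positivity
  have hab : ∑ k, σ k * (α k * β k) ≤ σ₀ * t := by
    rw [ht, Finset.mul_sum]
    refine Finset.sum_le_sum fun k _ => ?_
    have h1 : α k * β k ≤ |α k| * |β k| := by rw [← abs_mul]; exact le_abs_self _
    have h2 : σ k ≤ σ₀ := hσdec ⟨0, hr⟩ k (by simp [Fin.le_def])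
    have h3 : (0:ℝ) ≤ |α k| * |β k| := by positivity
    nlinarith [(hσpos k).le]
  have hcs : t ^ 2 ≤ (∑ k, (α k) ^ 2) * (∑ k, (β k) ^ 2) := by
    have h := Finset.sum_mul_sq_le_sq_mul_sq Finset.univ (fun k => |α k|) (fun k => |β k|)
    simpa [sq_abs] using h
  have hbx : ∑ k, (α k) ^ 2 ≤ ∑ i, (x i) ^ 2 := bessel' u hu x
  have hby : ∑ k, (β k) ^ 2 ≤ ∑ j, (y j) ^ 2 := bessel' v hv y
  have hX0 : (0:ℝ) ≤ ∑ k, (α k) ^ 2 := Finset.sum_nonneg fun k _ => sq_nonneg _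
  have hY0 : (0:ℝ) ≤ ∑ k, (β k) ^ 2 := Finset.sum_nonneg fun k _ => sq_nonneg _
  have hXY : t ^ 2 ≤ (∑ i, (x i) ^ 2) * (∑ j, (y j) ^ 2) := by
    calc t ^ 2 ≤ (∑ k, (α k) ^ 2) * (∑ k, (β k) ^ 2) := hcs
      _ ≤ (∑ i, (x i) ^ 2) * (∑ j, (y j) ^ 2) :=
        mul_le_mul hbx hby hY0 (le_trans hX0 hbx)
  have hσ00 : 0 < σ₀ := hσpos _
  nlinarith [sq_nonneg (σ₀ - t)]

private lemma value' {n r : ℕ} (hr : 0 < r) (σ : Fin r → ℝ) (u v : Fin r → Fin n → ℝ)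
    (hσpos : ∀ i, 0 < σ i)
    (hu : ∀ i j : Fin r, (∑ k, u i k * u j k) = if i = j then 1 else 0)
    (hv : ∀ i j : Fin r, (∑ k, v i k * v j k) = if i = j then 1 else 0) :
    ∑ i, ∑ j, ((∑ k, σ k * (u k i * v k j))
        - (Real.sqrt (σ ⟨0, hr⟩) * u ⟨0, hr⟩ i) * (Real.sqrt (σ ⟨0, hr⟩) * v ⟨0, hr⟩ j)) ^ 2
      = (∑ k, (σ k) ^ 2) - (σ ⟨0, hr⟩) ^ 2 := by
  set z : Fin r := ⟨0, hr⟩ with hz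
  set s : ℝ := Real.sqrt (σ z) with hs
  have hs2 : s * s = σ z := Real.mul_self_sqrt (hσpos z).le
  rw [expand_formula' σ u v hu hv (fun i => s * u z i) (fun j => s * v z j)]
  have hxα : ∀ k, (∑ i, u k i * (s * u z i)) = s * (if k = z then 1 else 0) := by
    intro k
    simp_rw [mul_left_comm (u k _) s]
    rw [← Finset.mul_sum, hu k z]
  have hyβ : ∀ k, (∑ j, v k j * (s * v z j)) = s * (if k = z then 1 else 0) := by
    intro k
    simp_rw [mul_left_comm (v k _) s]
    rw [← Finset.mul_sum, hv k z]
  have hX : ∑ i, (s * u z i) ^ 2 = σ z := by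
    simp_rw [mul_pow, ← Finset.mul_sum, sq]
    rw [show (∑ i, u z i * u z i) = 1 from by rw [hu z z]; simp]
    rw [mul_one, hs2]
  have hY : ∑ j, (s * v z j) ^ 2 = σ z := by
    simp_rw [mul_pow, ← Finset.mul_sum, sq]
    rw [show (∑ j, v z j * v z j) = 1 from by rw [hv z z]; simp]
    rw [mul_one, hs2]
  simp_rw [hxα, hyβ]
  have hmid : ∑ k, σ k * ((s * (if k = z then 1 else 0)) * (s * (if k = z then 1 else 0)))
      = σ z * σ z := by
    have h : ∀ k : Fin r, σ k * ((s * (if k = z then 1 else 0)) * (s * (if k = z then 1 else 0)))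
        = if k = z then σ k * (s * s) else 0 := by
      intro k; split <;> simp_all
    simp_rw [h]
    rw [Finset.sum_ite_eq' Finset.univ z (fun k => σ k * (s * s))]
    simp [hs2]
  rw [hmid, hX, hY]
  ring

/-- If `‖H − A(a) ⊗ B(b)‖_F = ‖R P Rᵀ − (Ra)(Rb)ᵀ‖_F` for all `a, b` with `R`
invertible, then the minimum of `‖H − A(a) ⊗ B(b)‖_F` over `a, b` is attained
at `a = √σ₁ R⁻¹ ũ₁`, `b = √σ₁ R⁻¹ ṽ₁`, built from the SVD
`P̃ = R P Rᵀ = ∑ σᵢ ũᵢ ṽᵢᵀ`. -/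
theorem kronecker_approx_minimizer (n m r : ℕ) (hr : 0 < r)
    (R P : Matrix (Fin n) (Fin n) ℝ) (hR : IsUnit R.det)
    (A B : (Fin n → ℝ) → Matrix (Fin m) (Fin m) ℝ)
    (H : Matrix (Fin m × Fin m) (Fin m × Fin m) ℝ)
    (hid : ∀ a b : Fin n → ℝ,
      Real.sqrt (∑ p, ∑ q, ((H - (A a) ⊗ₖ (B b)) p q) ^ 2) =
        Real.sqrt (∑ i, ∑ j,
          ((R * P * Rᵀ - Matrix.vecMulVec (R.mulVec a) (R.mulVec b)) i j) ^ 2))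
    (σ : Fin r → ℝ) (u v : Fin r → Fin n → ℝ)
    (hσpos : ∀ i, 0 < σ i)
    (hσdec : ∀ i j : Fin r, i ≤ j → σ j ≤ σ i)
    (hu : ∀ i j : Fin r, (∑ k, u i k * u j k) = if i = j then 1 else 0)
    (hv : ∀ i j : Fin r, (∑ k, v i k * v j k) = if i = j then 1 else 0)
    (hSVD : R * P * Rᵀ = ∑ i, σ i • Matrix.vecMulVec (u i) (v i))
    (a₀ b₀ : Fin n → ℝ)
    (ha₀ : a₀ = Real.sqrt (σ ⟨0, hr⟩) • R⁻¹.mulVec (u ⟨0, hr⟩))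
    (hb₀ : b₀ = Real.sqrt (σ ⟨0, hr⟩) • R⁻¹.mulVec (v ⟨0, hr⟩)) :
    ∀ a b : Fin n → ℝ,
      Real.sqrt (∑ p, ∑ q, ((H - (A a₀) ⊗ₖ (B b₀)) p q) ^ 2) ≤
        Real.sqrt (∑ p, ∑ q, ((H - (A a) ⊗ₖ (B b)) p q) ^ 2) := by
  intro a b
  rw [hid a₀ b₀, hid a b]
  apply Real.sqrt_le_sqrt
  have hentry : ∀ (c d : Fin n → ℝ) (i j : Fin n),
      (R * P * Rᵀ - Matrix.vecMulVec (R.mulVec c) (R.mulVec d)) i j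
        = (∑ k, σ k * (u k i * v k j)) - (R.mulVec c) i * (R.mulVec d) j := by
    intro c d i j
    rw [Matrix.sub_apply, hSVD, Matrix.vecMulVec_apply]
    congr 1
    simp [Matrix.sum_apply, Matrix.vecMulVec_apply, mul_assoc]
  simp_rw [hentry]
  have hRa : R.mulVec a₀ = fun i => Real.sqrt (σ ⟨0, hr⟩) * u ⟨0, hr⟩ i := by
    rw [ha₀, Matrix.mulVec_smul, Matrix.mulVec_mulVec, Matrix.mul_nonsing_inv R hR,
      Matrix.one_mulVec]
    rfl
  have hRb : R.mulVec b₀ = fun j => Real.sqrt (σ ⟨0, hr⟩) * v ⟨0, hr⟩ j := by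
    rw [hb₀, Matrix.mulVec_smul, Matrix.mulVec_mulVec, Matrix.mul_nonsing_inv R hR,
      Matrix.one_mulVec]
    rfl
  rw [hRa, hRb]
  rw [value' hr σ u v hσpos hu hv]
  exact lower_bound' hr σ u v hσpos hσdec hu hv _ _ (expand_formula' σ u v hu hv _ _)
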